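/- Let (X,B,m) be a σ-finite measure space, T:X→X an invertible, conservative, ergodic, measure-preserving transformation, and I∈B with 0<m(I)<∞. Suppose there are integers q_1<q_2<q_3<… and positive reals C_1 ≤ C_2 ≤ … with C_ν → ∞ and C_{ν+1} ≤ J·C_ν for all ν (for some constant J≥1), such that for m-a.e. x∈I and every ν≥1: C_ν ≤ Σ_{q_ν}(1_I)(x) ≤ 2C_ν. Define a_n := C_ν for q_ν ≤ n < q_{ν+1} (and a_n := C_1 for n < q_1). Then for m-a.e. x∈X, 1 ≤ liminf_{n→∞} Σ_n(1_I)(x)/a_n ≤ limsup_{n→∞} Σ_n(1_I)(x)/a_n ≤ 2J. (This is the key estimate showing that rank-one transformations with bounded cutting numbers satisfy property (☛).) -/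

import Mathlib

open MeasureTheory Filter Set Topology ENNReal

/-- The symmetric Birkhoff sum `Σ_n(1_A)(x) = Σ_{k=-n}^{n} 1_A(T^k x)`, valued in `ℝ≥0∞`. -/
noncomputable def symSum {X : Type*} [MeasurableSpace X] (T : X ≃ᵐ X) (A : Set X)
    (n : ℕ) (x : X) : ℝ≥0∞ :=
  (∑ k ∈ Finset.range (n + 1), A.indicator (1 : X → ℝ≥0∞) ((⇑T)^[k] x))
    + ∑ k ∈ Finset.range n, A.indicator (1 : X → ℝ≥0∞) ((⇑T.symm)^[k + 1] x)

section helpers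
variable {X : Type*} [MeasurableSpace X] (T : X ≃ᵐ X) (A : Set X)

lemma perm_pow_apply (k : ℕ) (x : X) : (T.toEquiv ^ k) x = (⇑T)^[k] x := by
  induction k generalizing x with
  | zero => simp
  | succ n ih =>
    rw [pow_succ, Equiv.Perm.mul_apply, Function.iterate_succ_apply, ih]
    rfl

lemma perm_zpow_neg_apply (k : ℕ) (x : X) :
    (T.toEquiv ^ (-(k : ℤ))) x = (⇑T.symm)^[k] x := by
  induction k generalizing x with
  | zero => simp
  | succ n ih =>
    have : (-(↑(n+1) : ℤ)) = (-(n:ℤ)) + (-1) := by push_cast; ring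
    rw [this, zpow_add, Equiv.Perm.mul_apply, Function.iterate_succ_apply]
    rw [ih]
    congr 1

lemma symSum_succ (n : ℕ) (x : X) :
    symSum T A (n+1) x = symSum T A n x + A.indicator 1 ((⇑T)^[n+1] x)
      + A.indicator 1 ((⇑T.symm)^[n+1] x) := by
  unfold symSum
  simp only [Finset.sum_range_succ]
  ring

lemma symSum_eq_Icc (n : ℕ) (x : X) :
    symSum T A n x
      = ∑ j ∈ Finset.Icc (-(n:ℤ)) (n:ℤ), A.indicator 1 ((T.toEquiv ^ j) x) := by
  induction n with
  | zero =>
    simp [symSum]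
  | succ n ih =>
    have hset : Finset.Icc (-((n+1:ℕ):ℤ)) ((n+1:ℕ):ℤ)
        = insert (-((n:ℤ)+1)) (insert ((n:ℤ)+1) (Finset.Icc (-(n:ℤ)) (n:ℤ))) := by
      ext j; simp only [Finset.mem_Icc, Finset.mem_insert]; push_cast; omega
    rw [symSum_succ, ih, hset, Finset.sum_insert, Finset.sum_insert]
    · have h1 : (T.toEquiv ^ ((n:ℤ)+1)) x = (⇑T)^[n+1] x := by
        rw [show ((n:ℤ)+1) = ((n+1:ℕ):ℤ) by push_cast; ring, zpow_natCast, perm_pow_apply]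
      have h2 : (T.toEquiv ^ (-((n:ℤ)+1))) x = (⇑T.symm)^[n+1] x := by
        rw [show (-((n:ℤ)+1)) = (-((n+1:ℕ):ℤ)) by push_cast; ring, perm_zpow_neg_apply]
      rw [h1, h2]
      ring
    · simp only [Finset.mem_Icc]; omega
    · simp only [Finset.mem_insert, Finset.mem_Icc]; omega

lemma indicator_one_le (z : X) : A.indicator (1 : X → ℝ≥0∞) z ≤ 1 := by
  classical
  by_cases h : z ∈ A <;> simp [Set.indicator, h]

lemma symSum_mono (x : X) : Monotone fun n => symSum T A n x := by
  intro n m h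
  simp only [symSum_eq_Icc]
  apply Finset.sum_le_sum_of_subset
  apply Finset.Icc_subset_Icc <;> push_cast <;> omega

lemma symSum_zpow_le (c : ℤ) (n : ℕ) (x : X) :
    symSum T A n ((T.toEquiv ^ c) x) ≤ symSum T A n x + (c.natAbs : ℝ≥0∞) := by
  classical
  rw [symSum_eq_Icc, symSum_eq_Icc]
  have hre : ∀ j : ℤ, (T.toEquiv ^ j) ((T.toEquiv ^ c) x) = (T.toEquiv ^ (j + c)) x := by
    intro j; rw [← Equiv.Perm.mul_apply, ← zpow_add]
  simp only [hre]
  have hmap := Finset.sum_map (Finset.Icc (-(n:ℤ)) (n:ℤ)) (addRightEmbedding c)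
    (fun j => A.indicator (1 : X → ℝ≥0∞) ((T.toEquiv ^ j) x))
  rw [Finset.map_add_right_Icc] at hmap
  simp only [addRightEmbedding_apply] at hmap
  rw [show (∑ j ∈ Finset.Icc (-(n:ℤ)) (n:ℤ),
      A.indicator (1 : X → ℝ≥0∞) ((T.toEquiv ^ (j + c)) x))
      = ∑ j ∈ Finset.Icc (-(n:ℤ) + c) ((n:ℤ) + c),
        A.indicator (1 : X → ℝ≥0∞) ((T.toEquiv ^ j) x) from hmap.symm]
  set g : ℤ → ℝ≥0∞ := fun j => A.indicator (1 : X → ℝ≥0∞) ((T.toEquiv ^ j) x) with hg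
  set t := Finset.Icc (-(n:ℤ) + c) ((n:ℤ) + c) with ht
  set s := Finset.Icc (-(n:ℤ)) (n:ℤ) with hs
  have hsplit : ∑ j ∈ t, g j = (∑ j ∈ t ∩ s, g j) + ∑ j ∈ t \ s, g j :=
    (Finset.sum_inter_add_sum_sdiff t s g).symm
  have h1 : ∑ j ∈ t ∩ s, g j ≤ ∑ j ∈ s, g j :=
    Finset.sum_le_sum_of_subset (Finset.inter_subset_right)
  have h2 : ∑ j ∈ t \ s, g j ≤ ((t \ s).card : ℝ≥0∞) := by
    calc ∑ j ∈ t \ s, g j ≤ (t \ s).card • (1 : ℝ≥0∞) :=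
          Finset.sum_le_card_nsmul _ _ _ (fun j _ => indicator_one_le A _)
      _ = ((t \ s).card : ℝ≥0∞) := by simp
  have hcard : (t \ s).card ≤ c.natAbs := by
    rcases le_or_gt 0 c with hc | hc
    · have hsub : t \ s ⊆ Finset.Ioc (n:ℤ) ((n:ℤ) + c) := by
        intro j hj
        simp only [ht, hs, Finset.mem_sdiff, Finset.mem_Icc, Finset.mem_Ioc] at *
        omega
      calc (t \ s).card ≤ (Finset.Ioc (n:ℤ) ((n:ℤ)+c)).card := Finset.card_le_card hsub
        _ = c.natAbs := by rw [Int.card_Ioc]; omega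
    · have hsub : t \ s ⊆ Finset.Ico (-(n:ℤ) + c) (-(n:ℤ)) := by
        intro j hj
        simp only [ht, hs, Finset.mem_sdiff, Finset.mem_Icc, Finset.mem_Ico] at *
        omega
      calc (t \ s).card ≤ (Finset.Ico (-(n:ℤ)+c) (-(n:ℤ))).card := Finset.card_le_card hsub
        _ = c.natAbs := by rw [Int.card_Ico]; omega
  calc ∑ j ∈ t, g j ≤ ∑ j ∈ s, g j + ((t \ s).card : ℝ≥0∞) := by
        rw [hsplit]; exact add_le_add h1 h2
    _ ≤ ∑ j ∈ s, g j + (c.natAbs : ℝ≥0∞) := by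
        gcongr

lemma measurable_zpow (c : ℤ) : Measurable fun x : X => (T.toEquiv ^ c) x := by
  obtain ⟨k, rfl | rfl⟩ := Int.eq_nat_or_neg c
  · simp only [zpow_natCast, perm_pow_apply]
    exact T.measurable.iterate k
  · simp only [perm_zpow_neg_apply]
    exact T.symm.measurable.iterate k

lemma symSum_measurable (hA : MeasurableSet A) (n : ℕ) :
    Measurable (symSum T A n) := by
  unfold symSum
  apply Measurable.add
  · apply Finset.measurable_sum
    intro k _
    exact (measurable_one.indicator hA).comp (T.measurable.iterate k)
  · apply Finset.measurable_sum
    intro k _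
    exact (measurable_one.indicator hA).comp (T.symm.measurable.iterate (k+1))

end helpers

/-- Theorem 3 (key estimate): if heights `q_ν` and constants `C_ν` (nondecreasing,
`C_{ν+1} ≤ J·C_ν`, `C_ν → ∞`) satisfy `C_ν ≤ Σ_{q_ν}(1_I)(x) ≤ 2C_ν` a.e. on `I`, then with
`a_n := C_ν` for `q_ν ≤ n < q_{ν+1}`, a.e. `1 ≤ liminf Σ_n(1_I)/a_n ≤ limsup Σ_n(1_I)/a_n ≤ 2J`. -/
theorem rank_one_bounded_cuts_property
    {X : Type*} [MeasurableSpace X] (m : Measure X) [SigmaFinite m]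
    (T : X ≃ᵐ X) (hE : Ergodic (⇑T) m) (hC : Conservative (⇑T) m)
    (I : Set X) (hI : MeasurableSet I) (hI0 : 0 < m I) (hI1 : m I < ∞)
    (q : ℕ → ℕ) (hq : StrictMono q)
    (C : ℕ → ℝ) (hCpos : ∀ ν, 0 < C ν) (hCmono : Monotone C)
    (hCtop : Tendsto C atTop atTop)
    (J : ℝ) (hJ : 1 ≤ J) (hCJ : ∀ ν, C (ν + 1) ≤ J * C ν)
    (hbound : ∀ᵐ x ∂(m.restrict I), ∀ ν,
      ENNReal.ofReal (C ν) ≤ symSum T I (q ν) x ∧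
      symSum T I (q ν) x ≤ ENNReal.ofReal (2 * C ν))
    (a : ℕ → ℝ)
    (ha : ∀ ν n, q ν ≤ n → n < q (ν + 1) → a n = C ν)
    (ha0 : ∀ n, n < q 0 → a n = C 0) :
    ∀ᵐ x ∂m,
      (1 : ℝ≥0∞) ≤ liminf (fun n => symSum T I n x / ENNReal.ofReal (a n)) atTop ∧
      liminf (fun n => symSum T I n x / ENNReal.ofReal (a n)) atTop ≤
        limsup (fun n => symSum T I n x / ENNReal.ofReal (a n)) atTop ∧
      limsup (fun n => symSum T I n x / ENNReal.ofReal (a n)) atTop ≤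
        ENNReal.ofReal (2 * J) := by
  classical
  have hblock : ∀ n, q 0 ≤ n → ∃ ν, q ν ≤ n ∧ n < q (ν+1) := by
    intro n hn
    refine ⟨Nat.findGreatest (fun ν => q ν ≤ n) n,
      Nat.findGreatest_spec (P := fun ν => q ν ≤ n) (m := 0) (n := n) (Nat.zero_le n) hn, ?_⟩
    by_contra h
    push_neg at h
    have h2 : Nat.findGreatest (fun ν => q ν ≤ n) n + 1 ≤ n := le_trans hq.le_apply h
    exact Nat.findGreatest_is_greatest (Nat.lt_succ_self _) h2 h
  have haC : ∀ M n, q M ≤ n → C M ≤ a n := by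
    intro M n hMn
    obtain ⟨ν, h1, h2⟩ := hblock n (le_trans (hq.monotone (Nat.zero_le M)) hMn)
    have hMν : M ≤ ν := by
      by_contra h
      push_neg at h
      have : q (ν+1) ≤ n := le_trans (hq.monotone h) hMn
      omega
    rw [ha ν n h1 h2]
    exact hCmono hMν
  have ha_top : Tendsto a atTop atTop := by
    rw [tendsto_atTop]
    intro b
    obtain ⟨M, hM⟩ := (hCtop.eventually_ge_atTop b).exists
    filter_upwards [eventually_ge_atTop (q M)] with n hn
    exact hM.trans (haC M n hn)
  -- the key analytic lemma
  have key : ∀ y : X,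
      (∀ ν, ENNReal.ofReal (C ν) ≤ symSum T I (q ν) y ∧
        symSum T I (q ν) y ≤ ENNReal.ofReal (2 * C ν)) →
      ∀ c : ℤ,
      (1 : ℝ≥0∞) ≤ liminf
          (fun n => symSum T I n ((T.toEquiv ^ c) y) / ENNReal.ofReal (a n)) atTop ∧
      liminf (fun n => symSum T I n ((T.toEquiv ^ c) y) / ENNReal.ofReal (a n)) atTop ≤
        limsup (fun n => symSum T I n ((T.toEquiv ^ c) y) / ENNReal.ofReal (a n)) atTop ∧
      limsup (fun n => symSum T I n ((T.toEquiv ^ c) y) / ENNReal.ofReal (a n)) atTop ≤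
        ENNReal.ofReal (2 * J) := by
    intro y hy c
    set x := (T.toEquiv ^ c) y with hxdef
    have hxy : ∀ n, symSum T I n x ≤ symSum T I n y + (c.natAbs : ℝ≥0∞) :=
      fun n => symSum_zpow_le T I c n y
    have hinvpt : (T.toEquiv ^ (-c)) ((T.toEquiv ^ c) y) = y := by
      rw [← Equiv.Perm.mul_apply, ← zpow_add, neg_add_cancel, zpow_zero, Equiv.Perm.one_apply]
    have hyx : ∀ n, symSum T I n y ≤ symSum T I n x + (c.natAbs : ℝ≥0∞) := by
      intro n
      have h := symSum_zpow_le T I (-c) n x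
      rw [hxdef, hinvpt, Int.natAbs_neg] at h
      rw [hxdef]
      exact h
    have hev : ∀ ε : ℝ, 0 < ε → ∀ᶠ n in atTop,
        ∃ ν, q ν ≤ n ∧ n < q (ν+1) ∧ a n = C ν ∧
          ((c.natAbs : ℝ≥0∞) ≤ ENNReal.ofReal (ε * a n)) := by
      intro ε hε
      filter_upwards [eventually_ge_atTop (q 0),
        ha_top.eventually_ge_atTop ((c.natAbs : ℝ) / ε)] with n h0 h1
      obtain ⟨ν, hν1, hν2⟩ := hblock n h0
      refine ⟨ν, hν1, hν2, ha ν n hν1 hν2, ?_⟩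
      rw [← ENNReal.ofReal_natCast]
      apply ENNReal.ofReal_le_ofReal
      calc ((c.natAbs : ℝ)) = ε * ((c.natAbs : ℝ)/ε) := by field_simp
        _ ≤ ε * a n := by
            apply mul_le_mul_of_nonneg_left h1 hε.le
    have hlow : ∀ ε : ℝ, 0 < ε → ε < 1 → ∀ᶠ n in atTop,
        ENNReal.ofReal (1 - ε) ≤ symSum T I n x / ENNReal.ofReal (a n) := by
      intro ε hε hε1
      filter_upwards [hev ε hε] with n hn
      obtain ⟨ν, h1, h2, h3, h4⟩ := hn
      have hapos : 0 < a n := h3 ▸ hCpos ν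
      have hchain : ENNReal.ofReal (a n) ≤ symSum T I n x + ENNReal.ofReal (ε * a n) := by
        calc ENNReal.ofReal (a n) = ENNReal.ofReal (C ν) := by rw [h3]
          _ ≤ symSum T I (q ν) y := (hy ν).1
          _ ≤ symSum T I n y := symSum_mono T I y h1
          _ ≤ symSum T I n x + (c.natAbs : ℝ≥0∞) := hyx n
          _ ≤ symSum T I n x + ENNReal.ofReal (ε * a n) := by gcongr
      have hsplitr : ENNReal.ofReal (a n)
          = ENNReal.ofReal ((1-ε) * a n) + ENNReal.ofReal (ε * a n) := by
        rw [← ENNReal.ofReal_add (by nlinarith) (by positivity)]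
        ring_nf
      rw [hsplitr] at hchain
      have hnum : ENNReal.ofReal ((1-ε) * a n) ≤ symSum T I n x :=
        (ENNReal.add_le_add_iff_right ENNReal.ofReal_ne_top).1 hchain
      calc ENNReal.ofReal (1 - ε)
          = ENNReal.ofReal ((1-ε) * a n) / ENNReal.ofReal (a n) := by
            rw [← ENNReal.ofReal_div_of_pos hapos, mul_div_assoc,
              div_self (ne_of_gt hapos), mul_one]
        _ ≤ symSum T I n x / ENNReal.ofReal (a n) := ENNReal.div_le_div_right hnum _
    have hup : ∀ ε : ℝ, 0 < ε → ∀ᶠ n in atTop,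
        symSum T I n x / ENNReal.ofReal (a n) ≤ ENNReal.ofReal (2*J + ε) := by
      intro ε hε
      filter_upwards [hev ε hε] with n hn
      obtain ⟨ν, h1, h2, h3, h4⟩ := hn
      have hapos : 0 < a n := h3 ▸ hCpos ν
      have hchain : symSum T I n x ≤ ENNReal.ofReal ((2*J + ε) * a n) := by
        calc symSum T I n x ≤ symSum T I n y + (c.natAbs : ℝ≥0∞) := hxy n
          _ ≤ symSum T I (q (ν+1)) y + ENNReal.ofReal (ε * a n) := by
              gcongr
              exact symSum_mono T I y (le_of_lt h2)
          _ ≤ ENNReal.ofReal (2 * C (ν+1)) + ENNReal.ofReal (ε * a n) := by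
              gcongr
              exact (hy (ν+1)).2
          _ ≤ ENNReal.ofReal (2 * J * a n) + ENNReal.ofReal (ε * a n) := by
              refine add_le_add_left (ENNReal.ofReal_le_ofReal ?_) _
              rw [h3]
              nlinarith [hCJ ν, hCpos ν]
          _ = ENNReal.ofReal ((2*J + ε) * a n) := by
              rw [← ENNReal.ofReal_add (by nlinarith [hCpos ν, h3 ▸ hCpos ν]) (by positivity)]
              ring_nf
      calc symSum T I n x / ENNReal.ofReal (a n)
          ≤ ENNReal.ofReal ((2*J+ε) * a n) / ENNReal.ofReal (a n) :=
            ENNReal.div_le_div_right hchain _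
        _ = ENNReal.ofReal (2*J+ε) := by
            rw [← ENNReal.ofReal_div_of_pos hapos, mul_div_assoc,
              div_self (ne_of_gt hapos), mul_one]
    refine ⟨?_, liminf_le_limsup, ?_⟩
    · apply le_of_forall_lt_imp_le_of_dense
      intro b hb
      have hbne : b ≠ ⊤ := ne_top_of_lt hb
      have hbr : b.toReal < 1 := by
        have := (ENNReal.toReal_lt_toReal hbne ENNReal.one_ne_top).2 hb
        simpa using this
      set ε : ℝ := (1 - b.toReal)/2 with hεdef
      have hε : 0 < ε := by
        rw [hεdef]; linarith
      have hε1 : ε < 1 := by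
        have : (0:ℝ) ≤ b.toReal := ENNReal.toReal_nonneg
        rw [hεdef]; linarith
      calc b = ENNReal.ofReal b.toReal := (ENNReal.ofReal_toReal hbne).symm
        _ ≤ ENNReal.ofReal (1 - ε) := by
            apply ENNReal.ofReal_le_ofReal
            rw [hεdef]; linarith
        _ = liminf (fun _ : ℕ => ENNReal.ofReal (1-ε)) atTop := (liminf_const _).symm
        _ ≤ liminf (fun n => symSum T I n x / ENNReal.ofReal (a n)) atTop :=
            liminf_le_liminf (hlow ε hε hε1)
    · apply le_of_forall_gt_imp_ge_of_dense
      intro b hb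
      rcases eq_or_ne b ⊤ with rfl | hbne
      · exact le_top
      have h2J : (0:ℝ) ≤ 2*J := by linarith
      have hbr : 2*J < b.toReal := (ENNReal.ofReal_lt_iff_lt_toReal h2J hbne).1 hb
      set ε : ℝ := b.toReal - 2*J with hεdef
      have hε : 0 < ε := by rw [hεdef]; linarith
      have hsum : 2*J + ε = b.toReal := by rw [hεdef]; ring
      calc limsup (fun n => symSum T I n x / ENNReal.ofReal (a n)) atTop
          ≤ limsup (fun _ : ℕ => ENNReal.ofReal (2*J+ε)) atTop :=
            limsup_le_limsup (hup ε hε)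
        _ = ENNReal.ofReal (2*J+ε) := limsup_const _
        _ = b := by rw [hsum, ENNReal.ofReal_toReal hbne]
  -- measure-theoretic part
  set Good : Set X := {x | ∀ ν, ENNReal.ofReal (C ν) ≤ symSum T I (q ν) x ∧
      symSum T I (q ν) x ≤ ENNReal.ofReal (2 * C ν)} with hGooddef
  have hGood_meas : MeasurableSet Good := by
    have heq : Good = ⋂ ν, ({x | ENNReal.ofReal (C ν) ≤ symSum T I (q ν) x}
        ∩ {x | symSum T I (q ν) x ≤ ENNReal.ofReal (2 * C ν)}) := by
      ext z
      simp [hGooddef, Set.mem_iInter, forall_and]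
    rw [heq]
    exact MeasurableSet.iInter fun ν =>
      (measurableSet_le measurable_const (symSum_measurable T I hI (q ν))).inter
        (measurableSet_le (symSum_measurable T I hI (q ν)) measurable_const)
  have h1 : ∀ᵐ z ∂m, z ∈ I → z ∈ Good := by
    rw [← ae_restrict_iff' hI]
    exact hbound
  have h0 : m (I \ Good) = 0 := by
    rw [ae_iff] at h1
    refine measure_mono_null ?_ h1
    intro z hz
    simp only [Set.mem_setOf_eq, Classical.not_imp]
    exact ⟨hz.1, hz.2⟩
  have hGI : 0 < m (I ∩ Good) := by
    have hle : m I ≤ m (I ∩ Good) + m (I \ Good) := measure_le_inter_add_diff m I Good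
    rw [h0, add_zero] at hle
    exact lt_of_lt_of_le hI0 hle
  set S : Set X := ⋃ c : ℤ, (fun z => (T.toEquiv ^ c) z) ⁻¹' (I ∩ Good) with hSdef
  have hS_meas : MeasurableSet S :=
    MeasurableSet.iUnion fun c => (hI.inter hGood_meas).preimage (measurable_zpow T c)
  have hfact : ∀ (c : ℤ) (z : X), (T.toEquiv ^ c) (T z) = (T.toEquiv ^ (c+1)) z := by
    intro c z
    rw [zpow_add_one, Equiv.Perm.mul_apply]
    rfl
  have hS_inv : (⇑T) ⁻¹' S = S := by
    ext z
    simp only [hSdef, Set.mem_preimage, Set.mem_iUnion]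
    constructor
    · rintro ⟨c, hc⟩
      exact ⟨c+1, by rwa [hfact] at hc⟩
    · rintro ⟨c, hc⟩
      refine ⟨c-1, ?_⟩
      rw [hfact]
      simpa using hc
  rcases hE.ae_empty_or_univ hS_meas hS_inv with hemp | huniv
  · exfalso
    have hsub : I ∩ Good ⊆ S := by
      intro z hz
      refine Set.mem_iUnion.2 ⟨0, ?_⟩
      simpa using hz
    have hS0 : m S = 0 := ae_eq_empty.1 hemp
    have := lt_of_lt_of_le hGI (measure_mono hsub)
    rw [hS0] at this
    exact lt_irrefl 0 this
  · have hae : ∀ᵐ z ∂m, z ∈ S := by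
      have hcompl := ae_eq_univ.1 huniv
      rw [ae_iff]
      exact hcompl
    filter_upwards [hae] with z hz
    obtain ⟨c, hc⟩ := Set.mem_iUnion.1 hz
    have hzGood : (T.toEquiv ^ c) z ∈ Good := hc.2
    have hk := key ((T.toEquiv ^ c) z) hzGood (-c)
    have hzz : (T.toEquiv ^ (-c)) ((T.toEquiv ^ c) z) = z := by
      rw [← Equiv.Perm.mul_apply, ← zpow_add, neg_add_cancel, zpow_zero, Equiv.Perm.one_apply]
    rwa [hzz] at hk
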